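/- For fixed α ∈ (0, 1/2), the quantity I(m, α) = sup_{θ<0}(αθ − log G(θ, 1/m)) is strictly positive for every m ≥ 1, where G(t,x) = (1 − e^{t(1+x)})/((1+1/x)(1 − e^{tx})). -/

import Mathlib

open Real

lemma sinh_le_mul_cosh {t : ℝ} (ht : 0 ≤ t) : Real.sinh t ≤ t * Real.cosh t := by
  have hf : ∀ x : ℝ, HasDerivAt (fun y => y * Real.cosh y - Real.sinh y)
      (x * Real.sinh x) x := by
    intro x
    have h1 := (hasDerivAt_id x).mul (Real.hasDerivAt_cosh x)
    have h2 := Real.hasDerivAt_sinh x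
    convert h1.sub h2 using 1
    all_goals try rfl
    simp
  have hmono : MonotoneOn (fun y => y * Real.cosh y - Real.sinh y) (Set.Ici 0) := by
    apply monotoneOn_of_deriv_nonneg (convex_Ici 0)
    · exact (Continuous.mul continuous_id Real.continuous_cosh).sub
        Real.continuous_sinh |>.continuousOn
    · intro x hx
      exact (hf x).differentiableAt.differentiableWithinAt
    · intro x hx
      rw [interior_Ici] at hx
      rw [(hf x).deriv]
      exact mul_nonneg (le_of_lt hx) (Real.sinh_nonneg_iff.mpr (le_of_lt hx))
  have h0 : (0:ℝ) ∈ Set.Ici (0:ℝ) := Set.mem_Ici.mpr le_rfl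
  have := hmono h0 (Set.mem_Ici.mpr ht) ht
  simpa using this

lemma one_sub_exp_eq {u : ℝ} : 1 - Real.exp (-(2*u)) = 2 * Real.exp (-u) * Real.sinh u := by
  rw [Real.sinh_eq]
  have h1 : Real.exp (-u) * Real.exp u = 1 := by rw [← Real.exp_add]; simp
  have h2 : Real.exp (-u) * Real.exp (-u) = Real.exp (-(2*u)) := by
    rw [← Real.exp_add]; ring_nf
  nlinarith [h1, h2]

/-- For fixed `α ∈ (0, 1/2)`, the quantity
`I(m,α) = sup_{θ<0} (αθ − log G(θ, 1/m))` is strictly positive for every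
`m ≥ 1`, where `G(t,x) = (1 − e^{t(1+x)})/((1+1/x)(1 − e^{tx}))`. -/
theorem instability_rate_pos (m : ℕ) (hm : 1 ≤ m) (α : ℝ)
    (hα : α ∈ Set.Ioo (0 : ℝ) (1 / 2)) :
    0 < sSup {y : ℝ | ∃ θ : ℝ, θ < 0 ∧
        y = α * θ - Real.log ((1 - Real.exp (θ * (1 + 1 / m))) /
          ((1 + 1 / (1 / (m : ℝ))) * (1 - Real.exp (θ * (1 / m)))))} := by
  obtain ⟨hα0, hα2⟩ := hα
  set M : ℝ := (m : ℝ) with hM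
  have hM1 : (1:ℝ) ≤ M := by rw [hM]; exact_mod_cast hm
  have hM0 : (0:ℝ) < M := lt_of_lt_of_le one_pos hM1
  have hMsimp : 1 + 1 / (1 / M) = 1 + M := by
    rw [one_div_one_div]
  -- bounded above
  have hbdd : BddAbove {y : ℝ | ∃ θ : ℝ, θ < 0 ∧
        y = α * θ - Real.log ((1 - Real.exp (θ * (1 + 1 / m))) /
          ((1 + 1 / (1 / (m : ℝ))) * (1 - Real.exp (θ * (1 / m)))))} := by
    refine ⟨Real.log (1 + M), ?_⟩
    rintro y ⟨θ, hθ, rfl⟩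
    have hx0 : (0:ℝ) < 1 / M := by positivity
    have h1 : θ * (1 + 1/M) < 0 := mul_neg_of_neg_of_pos hθ (by positivity)
    have h2 : θ * (1/M) < 0 := mul_neg_of_neg_of_pos hθ hx0
    have hE1 : Real.exp (θ * (1 + 1/M)) < 1 := Real.exp_lt_one_iff.mpr h1
    have hE2 : Real.exp (θ * (1/M)) < 1 := Real.exp_lt_one_iff.mpr h2
    have hE12 : Real.exp (θ * (1 + 1/M)) ≤ Real.exp (θ * (1/M)) := by
      apply Real.exp_le_exp.mpr
      nlinarith
    have hden : 0 < (1 + M) * (1 - Real.exp (θ * (1/M))) := by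
      apply mul_pos (by linarith) (by linarith)
    have hGlb : 1 / (1 + M) ≤ (1 - Real.exp (θ * (1 + 1/M))) /
        ((1 + M) * (1 - Real.exp (θ * (1/M)))) := by
      rw [div_le_div_iff₀ (by linarith) hden]
      nlinarith
    have hlog : -Real.log (1 + M) ≤
        Real.log ((1 - Real.exp (θ * (1 + 1/M))) /
          ((1 + M) * (1 - Real.exp (θ * (1/M))))) := by
      have := Real.log_le_log (by positivity) hGlb
      rwa [Real.log_div one_ne_zero (by linarith), Real.log_one, zero_sub] at this
    have hαθ : α * θ ≤ 0 := le_of_lt (mul_neg_of_pos_of_neg hα0 hθ)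
    rw [hMsimp]
    simp only [← hM]
    linarith
  -- witness
  set s : ℝ := 1/2 - α with hs
  have hs0 : 0 < s := by simp [hs]; linarith
  have hs2 : s < 1/2 := by simp [hs]; linarith
  set u : ℝ := s * (1 + 1/M) / 2 with hu
  set v : ℝ := s / (2 * M) with hv
  have hv0 : 0 < v := by positivity
  have hu0 : 0 < u := by positivity
  have huv : u = v + s / 2 := by field_simp [hu, hv]; ring
  have hus : u ≤ s := by
    rw [hu]
    have : 1 / M ≤ 1 := by rw [div_le_one hM0]; exact hM1
    nlinarith
  have huMv : u = (1 + M) * v := by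
    rw [hu, hv]; field_simp; ring
  have hθ1 : (-s) * (1 + 1/M) = -(2*u) := by rw [hu]; ring
  have hθ2 : (-s) * (1/M) = -(2*v) := by rw [hv]; field_simp
  -- the G value at θ = -s
  have hn1 : 1 - Real.exp ((-s) * (1 + 1/M)) = 2 * Real.exp (-u) * Real.sinh u := by
    rw [hθ1, one_sub_exp_eq]
  have hn2 : 1 - Real.exp ((-s) * (1/M)) = 2 * Real.exp (-v) * Real.sinh v := by
    rw [hθ2, one_sub_exp_eq]
  have hsinhv : 0 < Real.sinh v := Real.sinh_pos_iff.mpr hv0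
  have hsinhu : 0 < Real.sinh u := Real.sinh_pos_iff.mpr hu0
  have hcosh1 : (1:ℝ) ≤ Real.cosh s := Real.one_le_cosh s
  -- key inequality
  have hkey : Real.sinh u ≤ (1 + M) * Real.cosh s * Real.sinh v := by
    have h1 : Real.sinh u ≤ u * Real.cosh u := sinh_le_mul_cosh (le_of_lt hu0)
    have h2 : Real.cosh u ≤ Real.cosh s := by
      rw [Real.cosh_le_cosh, abs_of_pos hu0, abs_of_pos hs0]; exact hus
    have h3 : v ≤ Real.sinh v := le_of_lt (Real.self_lt_sinh_iff.mpr hv0)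
    have hcosh0 : 0 < Real.cosh s := Real.cosh_pos s
    calc Real.sinh u ≤ u * Real.cosh u := h1
      _ ≤ u * Real.cosh s := by nlinarith
      _ = (1 + M) * Real.cosh s * v := by rw [huMv]; ring
      _ ≤ (1 + M) * Real.cosh s * Real.sinh v := by
          apply mul_le_mul_of_nonneg_left h3 (by positivity)
  -- G ≤ cosh s * exp(-s/2)
  have hden : 0 < (1 + M) * (1 - Real.exp ((-s) * (1/M))) := by
    rw [hn2]; positivity
  have hnum : 0 < 1 - Real.exp ((-s) * (1 + 1/M)) := by rw [hn1]; positivity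
  have hGle : (1 - Real.exp ((-s) * (1 + 1/M))) /
      ((1 + M) * (1 - Real.exp ((-s) * (1/M)))) ≤ Real.cosh s * Real.exp (-s/2) := by
    rw [div_le_iff₀ hden, hn1, hn2]
    have hexp : Real.exp (-s/2) * Real.exp (-v) = Real.exp (-u) := by
      rw [← Real.exp_add, huv]; ring_nf
    have h4 : 2 * Real.exp (-u) * Real.sinh u ≤
        2 * Real.exp (-u) * ((1 + M) * Real.cosh s * Real.sinh v) := by
      apply mul_le_mul_of_nonneg_left hkey (by positivity)
    calc 2 * Real.exp (-u) * Real.sinh u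
        ≤ 2 * Real.exp (-u) * ((1 + M) * Real.cosh s * Real.sinh v) := h4
      _ = Real.cosh s * Real.exp (-s/2) * ((1 + M) * (2 * Real.exp (-v) * Real.sinh v)) := by
          rw [← hexp]; ring
  have hcoshle : Real.cosh s * Real.exp (-s/2) ≤ Real.exp (s^2/2 - s/2) := by
    have := Real.cosh_le_exp_half_sq s
    calc Real.cosh s * Real.exp (-s/2) ≤ Real.exp (s^2/2) * Real.exp (-s/2) := by
          apply mul_le_mul_of_nonneg_right this (le_of_lt (Real.exp_pos _))
      _ = Real.exp (s^2/2 - s/2) := by rw [← Real.exp_add]; ring_nf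
  have hG0 : 0 < (1 - Real.exp ((-s) * (1 + 1/M))) /
      ((1 + M) * (1 - Real.exp ((-s) * (1/M)))) := div_pos hnum hden
  have hlogG : Real.log ((1 - Real.exp ((-s) * (1 + 1/M))) /
      ((1 + M) * (1 - Real.exp ((-s) * (1/M))))) ≤ s^2/2 - s/2 := by
    have := Real.log_le_log hG0 (le_trans hGle hcoshle)
    rwa [Real.log_exp] at this
  have hfinal : s^2/2 - s/2 < α * (-s) := by
    have : α * (-s) = -s/2 + s^2 := by rw [hs]; ring
    rw [this]
    have hsq : 0 < s^2 := by positivity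
    clear_value u v s M
    linarith
  have hy0 : 0 < α * (-s) - Real.log ((1 - Real.exp ((-s) * (1 + 1/M))) /
      ((1 + M) * (1 - Real.exp ((-s) * (1/M))))) := by linarith
  have hmem : α * (-s) - Real.log ((1 - Real.exp ((-s) * (1 + 1/M))) /
      ((1 + M) * (1 - Real.exp ((-s) * (1/M))))) ∈
      {y : ℝ | ∃ θ : ℝ, θ < 0 ∧
        y = α * θ - Real.log ((1 - Real.exp (θ * (1 + 1 / m))) /
          ((1 + 1 / (1 / (m : ℝ))) * (1 - Real.exp (θ * (1 / m)))))} := by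
    refine ⟨-s, neg_neg_iff_pos.mpr hs0, ?_⟩
    rw [hMsimp]
  exact lt_of_lt_of_le hy0 (le_csSup hbdd hmem)
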